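/- Let G be a finite group and let P be a partition of G satisfying the Schur-ring axioms: (a) {e} is a block of P; (b) for every block C of P, the set C* = {c⁻¹ : c ∈ C} is a block of P; (c) for all blocks C, D of P and all x, y lying in a common block of P, the number of pairs (c,d) ∈ C × D with cd = x equals the number of pairs (c,d) ∈ C × D with cd = y. Assume further that P is commutative: for all blocks C, D and every x ∈ G, the number of pairs (c,d) ∈ C × D with cd = x equals the number of pairs (d,c) ∈ D × C with dc = x. Then the following are equivalent: (i) for all blocks C ≠ E of P there is exactly one block D of P such that E ⊆ C·D (where C·D = {cd : c ∈ C, d ∈ D}); (ii) for all x, y ∈ G, if x lies in block C, y lies in block D, xy lies in block E, and C ≠ D*, then C·D = E. -/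

import Mathlib

open scoped Classical Pointwise

/-- The conjugacy class of `x` in `G`. -/
def conjClass {G : Type*} [Group G] (x : G) : Set G := {y | ∃ g : G, g * x * g⁻¹ = y}

/-- The adjacency matrix of a subset `C` of `G`. -/
noncomputable def adjMat (G : Type*) [Group G] (C : Set G) : Matrix G G ℂ :=
  Matrix.of fun x y => if y * x⁻¹ ∈ C then (1 : ℂ) else 0

/-- The dual idempotent of a subset `C` of `G` (base point the identity). -/
noncomputable def dualIdem (G : Type*) [Group G] (C : Set G) : Matrix G G ℂ :=
  Matrix.of fun x y => if x = y ∧ y ∈ C then (1 : ℂ) else 0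

/-- The Terwilliger algebra of the group association scheme of `G`, with base point `e`. -/
noncomputable def TerwAlg (G : Type*) [Group G] [Fintype G] [DecidableEq G] : Subalgebra ℂ (Matrix G G ℂ) :=
  Algebra.adjoin ℂ
    ((Set.range fun x : G => adjMat G (conjClass x)) ∪
     (Set.range fun x : G => dualIdem G (conjClass x)))

/-- A Camina group: a nonabelian group in which every conjugacy class outside the
commutator subgroup is a coset of the commutator subgroup. -/
def IsCamina (G : Type*) [Group G] : Prop :=
  (¬ ∀ a b : G, a * b = b * a) ∧
  ∀ x : G, x ∉ commutator G → conjClass x = x • (commutator G : Set G)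

/-- The action of the unit group of a field on (the multiplicative version of) its
additive group, by multiplication. -/
noncomputable def frobAct (F : Type*) [Field F] : Fˣ →* MulAut (Multiplicative F) where
  toFun u := AddEquiv.toMultiplicative (DistribMulAction.toAddAut Fˣ F u)
  map_one' := by ext x; simp [map_one]; rfl
  map_mul' u v := by ext x; simp only [map_mul]; rfl


/-- The Frobenius group `F ⋊ Fˣ` for `F` the field with `p ^ r` elements. -/
abbrev FrobGrp (p r : ℕ) [Fact p.Prime] : Type :=
  Multiplicative (GaloisField p r) ⋊[frobAct (GaloisField p r)] (GaloisField p r)ˣ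

/-- The number of ways to write `x` as a product `c * d` with `c ∈ C` and `d ∈ D`. -/
noncomputable def pairCount {G : Type*} [Group G] (C D : Set G) (x : G) : ℕ :=
  Nat.card {q : G × G // q.1 ∈ C ∧ q.2 ∈ D ∧ q.1 * q.2 = x}

/-- Theorem 2.2: for a commutative Schur ring, Tanaka's intersection-number criterion for
almost commutativity of the Terwilliger algebra is equivalent to the product property. -/
theorem stmt0 {G : Type*} [Group G] [Fintype G] (P : Set (Set G))
    (hne : ∀ C ∈ P, C.Nonempty)
    (hdisj : ∀ C ∈ P, ∀ D ∈ P, C ≠ D → Disjoint C D)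
    (hcover : ∀ x : G, ∃ C ∈ P, x ∈ C)
    (hone : {(1 : G)} ∈ P)
    (hinv : ∀ C ∈ P, C⁻¹ ∈ P)
    (hschur : ∀ C ∈ P, ∀ D ∈ P, ∀ E ∈ P, ∀ x ∈ E, ∀ y ∈ E,
      pairCount C D x = pairCount C D y)
    (hcomm : ∀ C ∈ P, ∀ D ∈ P, ∀ x : G, pairCount C D x = pairCount D C x) :
    (∀ C ∈ P, ∀ E ∈ P, C ≠ E → ∃! D, D ∈ P ∧ E ⊆ C * D) ↔
      (∀ C ∈ P, ∀ D ∈ P, ∀ E ∈ P, ∀ x ∈ C, ∀ y ∈ D,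
        x * y ∈ E → C ≠ D⁻¹ → C * D = E) := by
  have hpos : ∀ (C D : Set G) (x : G), 0 < pairCount C D x ↔ x ∈ C * D := by
    intro C D x
    rw [pairCount, Nat.card_pos_iff]
    constructor
    · rintro ⟨⟨⟨c, d⟩, hc, hd, h⟩, -⟩
      exact Set.mem_mul.mpr ⟨c, hc, d, hd, h⟩
    · intro hx
      obtain ⟨c, hc, d, hd, h⟩ := Set.mem_mul.mp hx
      exact ⟨⟨⟨(c, d), hc, hd, h⟩⟩, inferInstance⟩
  have hsub : ∀ C ∈ P, ∀ D ∈ P, ∀ E ∈ P, ∀ x ∈ E, x ∈ C * D → E ⊆ C * D := by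
    intro C hC D hD E hE x hx hxCD y hy
    have h := hschur C hC D hD E hE x hx y hy
    rw [← hpos] at hxCD ⊢
    omega
  have heq : ∀ D ∈ P, ∀ F ∈ P, (D ∩ F).Nonempty → D = F := by
    intro D hD F hF hnon
    by_contra h
    exact (Set.not_disjoint_iff_nonempty_inter.mpr hnon) (hdisj D hD F hF h)
  constructor
  · intro h1 C hC D hD E hE x hx y hy hxy hCD
    have hECD : E ⊆ C * D :=
      hsub C hC D hD E hE (x * y) hxy (Set.mem_mul.mpr ⟨x, hx, y, hy, rfl⟩)
    refine Set.Subset.antisymm ?_ hECD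
    intro z hz
    obtain ⟨F, hF, hzF⟩ := hcover z
    have hFCD : F ⊆ C * D := hsub C hC D hD F hF z hzF hz
    obtain ⟨c, hc, d, hd, hcd⟩ := Set.mem_mul.mp hz
    have hE1 : C⁻¹ ⊆ D * E⁻¹ := by
      refine hsub D hD E⁻¹ (hinv E hE) C⁻¹ (hinv C hC) x⁻¹ (Set.inv_mem_inv.mpr hx)
        (Set.mem_mul.mpr ⟨y, hy, (x * y)⁻¹, Set.inv_mem_inv.mpr hxy, by group⟩)
    have hF1 : C⁻¹ ⊆ D * F⁻¹ := by
      refine hsub D hD F⁻¹ (hinv F hF) C⁻¹ (hinv C hC) c⁻¹ (Set.inv_mem_inv.mpr hc)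
        (Set.mem_mul.mpr ⟨d, hd, z⁻¹, Set.inv_mem_inv.mpr hzF, by rw [← hcd]; group⟩)
    have hDC : D ≠ C⁻¹ := by
      intro h
      exact hCD (by rw [h, inv_inv])
    obtain ⟨X, -, hXuniq⟩ := h1 D hD C⁻¹ (hinv C hC) hDC
    have hEX : E⁻¹ = X := hXuniq E⁻¹ ⟨hinv E hE, hE1⟩
    have hFX : F⁻¹ = X := hXuniq F⁻¹ ⟨hinv F hF, hF1⟩
    have hEF : E = F := by
      have : E⁻¹ = F⁻¹ := hEX.trans hFX.symm
      rw [← inv_inv E, this, inv_inv]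
    rw [hEF]
    exact hzF
  · intro h2 C hC E hE hCE
    obtain ⟨e, he⟩ := hne E hE
    obtain ⟨c, hc⟩ := hne C hC
    obtain ⟨F, hF, hdF⟩ := hcover (c⁻¹ * e)
    have hprod : C⁻¹ * E = F :=
      h2 C⁻¹ (hinv C hC) E hE F hF c⁻¹ (Set.inv_mem_inv.mpr hc) e he hdF
        (by intro h; exact hCE (by rw [← inv_inv C, h, inv_inv]))
    refine ⟨F, ⟨hF, ?_⟩, ?_⟩
    · exact hsub C hC F hF E hE e he (Set.mem_mul.mpr ⟨c, hc, c⁻¹ * e, hdF, by group⟩)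
    · rintro D ⟨hD, hED⟩
      obtain ⟨c', hc', d, hd, hcd⟩ := Set.mem_mul.mp (hED he)
      have hdF2 : d ∈ F := by
        rw [← hprod]
        exact Set.mem_mul.mpr ⟨c'⁻¹, Set.inv_mem_inv.mpr hc', e, he, by rw [← hcd]; group⟩
      exact heq D hD F hF ⟨d, hd, hdF2⟩
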